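/- Let ν > −1 and define I_ν(x) = Σ_{n≥0} (1/4)ⁿ x^{2n} / ((ν+1)_n n!). Then the function x ↦ ((ν+1)·I_ν(x)·I_{ν+2}(x)) / ((ν+2)·I_{ν+1}(x)²) is increasing on (0, ∞). -/

import Mathlib

open Finset Real

lemma U_closed (n : ℕ) : ∀ (a b : ℝ), 0 < a → 0 < b →
    ∑ k ∈ Finset.range (n+1), (n.choose k : ℝ) /
        (Real.Gamma (a + k) * Real.Gamma (b + (n - k : ℕ))) =
    (∏ j ∈ Finset.range n, (a + b + n - 1 + j)) /
        (Real.Gamma (a + n) * Real.Gamma (b + n)) := by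
  induction n with
  | zero => intro a b ha hb; simp
  | succ n ih =>
    intro a b ha hb
    have hGa : ∀ c : ℝ, 0 < c → Real.Gamma c ≠ 0 :=
      fun c hc => (Real.Gamma_pos_of_pos hc).ne'
    have key : ∑ k ∈ range (n+1+1), ((n+1).choose k : ℝ) /
          (Gamma (a + k) * Gamma (b + ((n+1) - k : ℕ)))
        = (∑ k ∈ range (n+1), (n.choose k : ℝ) / (Gamma ((a+1) + k) * Gamma (b + (n-k : ℕ))))
        + (∑ k ∈ range (n+1), (n.choose k : ℝ) / (Gamma (a + k) * Gamma ((b+1) + (n-k : ℕ)))) := by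
      rw [Finset.sum_range_succ' (fun k => ((n+1).choose k : ℝ) /
          (Gamma (a + k) * Gamma (b + ((n+1) - k : ℕ)))) (n+1)]
      have h1 : ∀ k ∈ range (n+1), ((n+1).choose (k+1) : ℝ) /
            (Gamma (a + (k+1:ℕ)) * Gamma (b + ((n+1) - (k+1) : ℕ)))
          = (n.choose k : ℝ) / (Gamma ((a+1) + k) * Gamma (b + (n-k : ℕ)))
            + (n.choose (k+1) : ℝ) / (Gamma (a + (k+1:ℕ)) * Gamma (b + (n-k : ℕ))) := by
        intro k hk
        have hsub : (n+1) - (k+1) = n - k := by omega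
        rw [hsub, Nat.choose_succ_succ]
        push_cast
        have : a + ((k:ℝ)+1) = (a+1) + k := by ring
        rw [this, add_div]
      rw [Finset.sum_congr rfl h1, Finset.sum_add_distrib]
      have h2 : ∑ k ∈ range (n+1), (n.choose (k+1) : ℝ) /
            (Gamma (a + ((k+1:ℕ):ℝ)) * Gamma (b + (n-k : ℕ)))
          = (∑ k ∈ range (n+1), (n.choose k : ℝ) / (Gamma (a + k) * Gamma ((b+1) + (n-k : ℕ))))
            - ((n.choose 0 : ℝ) / (Gamma (a + (0:ℕ)) * Gamma ((b+1) + (n-0 : ℕ)))) := by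
        have h3 : ∑ k ∈ range (n+1+1), (n.choose k : ℝ) /
              (Gamma (a + k) * Gamma (b + ((n+1) - k : ℕ)))
            = (∑ k ∈ range (n+1), (n.choose (k+1) : ℝ) /
              (Gamma (a + ((k+1:ℕ):ℝ)) * Gamma (b + (n-k : ℕ))))
              + (n.choose 0 : ℝ) / (Gamma (a + (0:ℕ)) * Gamma (b + ((n+1) - 0 : ℕ))) := by
          rw [Finset.sum_range_succ' (fun k => (n.choose k : ℝ) /
            (Gamma (a + k) * Gamma (b + ((n+1) - k : ℕ)))) (n+1)]
          congr 1
          refine Finset.sum_congr rfl fun k hk => ?_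
          have hsub : (n+1) - (k+1) = n - k := by omega
          rw [hsub]
        have h4 : ∑ k ∈ range (n+1+1), (n.choose k : ℝ) /
              (Gamma (a + k) * Gamma (b + ((n+1) - k : ℕ)))
            = ∑ k ∈ range (n+1), (n.choose k : ℝ) /
              (Gamma (a + k) * Gamma ((b+1) + (n-k : ℕ))) := by
          rw [Finset.sum_range_succ]
          simp only [Nat.choose_succ_self, Nat.cast_zero, zero_div, add_zero]
          refine Finset.sum_congr rfl fun k hk => ?_
          have hk' : k ≤ n := by simp at hk; omega
          have hsub : (n+1) - k = (n-k) + 1 := by omega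
          rw [hsub]
          have : b + (((n-k)+1 : ℕ):ℝ) = (b+1) + ((n-k : ℕ):ℝ) := by push_cast; ring
          rw [this]
        rw [h4] at h3
        have hsb : (n+1) - 0 = (n - 0) + 1 := by omega
        rw [hsb, show b + ((((n-0)+1) : ℕ):ℝ) = (b+1) + ((n-0 : ℕ):ℝ) by push_cast; ring] at h3
        linarith [h3]
      rw [h2]
      have hsub0 : (n+1) - 0 = (n - 0) + 1 := by omega
      rw [hsub0]
      have : b + ((((n-0)+1) : ℕ):ℝ) = (b+1) + ((n-0 : ℕ):ℝ) := by push_cast; ring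
      rw [this]
      simp only [Nat.choose_zero_right, Nat.cast_one]
      ring
    rw [key, ih (a+1) b (by linarith) hb, ih a (b+1) ha (by linarith)]
    have hprod1 : ∏ j ∈ Finset.range n, ((a+1) + b + n - 1 + j) =
        ∏ j ∈ Finset.range n, (a + b + n + j) := by
      refine Finset.prod_congr rfl fun j _ => by ring
    have hprod2 : ∏ j ∈ Finset.range n, (a + (b+1) + n - 1 + j) =
        ∏ j ∈ Finset.range n, (a + b + n + j) := by
      refine Finset.prod_congr rfl fun j _ => by ring
    have hprod3 : ∏ j ∈ Finset.range (n+1), (a + b + ((n+1:ℕ):ℝ) - 1 + j) =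
        (∏ j ∈ Finset.range n, (a + b + n + j)) * (a + b + 2*n) := by
      have := Finset.prod_range_succ (fun j => (a + b + ((n+1:ℕ):ℝ) - 1 + j)) n
      rw [this]
      push_cast
      rw [show (∏ j ∈ Finset.range n, (a + b + ((n:ℝ)+1) - 1 + j)) =
        ∏ j ∈ Finset.range n, (a + b + (n:ℝ) + j) from Finset.prod_congr rfl fun j _ => by ring]
      ring
    rw [hprod1, hprod2, hprod3]
    push_cast
    have hGan : Gamma (a + n) ≠ 0 := hGa _ (by positivity)
    have hGbn : Gamma (b + n) ≠ 0 := hGa _ (by positivity)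
    have he1 : Gamma (a + 1 + n) = (a + n) * Gamma (a + n) := by
      rw [show a + 1 + (n:ℝ) = (a + n) + 1 by ring, Real.Gamma_add_one (by positivity)]
    have he2 : Gamma (b + 1 + n) = (b + n) * Gamma (b + n) := by
      rw [show b + 1 + (n:ℝ) = (b + n) + 1 by ring, Real.Gamma_add_one (by positivity)]
    have he3 : Gamma (a + ((n:ℝ) + 1)) = (a + n) * Gamma (a + n) := by
      rw [show a + ((n:ℝ) + 1) = (a + n) + 1 by ring, Real.Gamma_add_one (by positivity)]
    have he4 : Gamma (b + ((n:ℝ) + 1)) = (b + n) * Gamma (b + n) := by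
      rw [show b + ((n:ℝ) + 1) = (b + n) + 1 by ring, Real.Gamma_add_one (by positivity)]
    rw [he1, he2, he3, he4]
    have han : a + (n:ℝ) ≠ 0 := by positivity
    have hbn : b + (n:ℝ) ≠ 0 := by positivity
    field_simp
    ring

noncomputable def besselINorm (ν x : ℝ) : ℝ :=
  ∑' n : ℕ, (1/4 : ℝ)^n * x^(2*n) /
    ((Real.Gamma (ν + n + 1) / Real.Gamma (ν + 1)) * n.factorial)

noncomputable def besselTerm (μ x : ℝ) (n : ℕ) : ℝ :=
  (1/4 : ℝ)^n * x^(2*n) / ((Real.Gamma (μ + n + 1) / Real.Gamma (μ + 1)) * n.factorial)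

noncomputable def pcoeff (μ σ : ℝ) (n : ℕ) : ℝ :=
  Real.Gamma (μ+1) * Real.Gamma (σ+1) * (∏ j ∈ Finset.range n, (μ + σ + n + 1 + j)) /
    (Real.Gamma (μ + n + 1) * Real.Gamma (σ + n + 1) * n.factorial)

lemma besselINorm_eq (μ x : ℝ) : besselINorm μ x = ∑' n, besselTerm μ x n := rfl

lemma gamma_shift_pos {μ : ℝ} (hμ : μ > -1) (n : ℕ) : 0 < Real.Gamma (μ + n + 1) :=
  Real.Gamma_pos_of_pos (by have : (0:ℝ) ≤ n := n.cast_nonneg; linarith)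

lemma besselTerm_eq {μ : ℝ} (hμ : μ > -1) (x : ℝ) (n : ℕ) :
    besselTerm μ x n = Real.Gamma (μ+1) / (Real.Gamma (μ + n + 1) * n.factorial) * (x^2/4)^n := by
  have h1 : (0:ℝ) < Real.Gamma (μ + n + 1) := gamma_shift_pos hμ n
  have h2 : (0:ℝ) < Real.Gamma (μ + 1) := Real.Gamma_pos_of_pos (by linarith)
  have h3 : (0:ℝ) < (n.factorial : ℝ) := by positivity
  rw [besselTerm, pow_mul, div_pow]
  field_simp
  rw [one_pow, ← mul_pow]; congr 1; ring

lemma besselTerm_nonneg {μ : ℝ} (hμ : μ > -1) (x : ℝ) (n : ℕ) : 0 ≤ besselTerm μ x n := by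
  rw [besselTerm_eq hμ]
  have h1 : (0:ℝ) < Real.Gamma (μ + n + 1) := gamma_shift_pos hμ n
  have h2 : (0:ℝ) < Real.Gamma (μ + 1) := Real.Gamma_pos_of_pos (by linarith)
  positivity

lemma besselTerm_succ {μ : ℝ} (hμ : μ > -1) (x : ℝ) (n : ℕ) :
    besselTerm μ x (n+1) = besselTerm μ x n * ((x^2/4) / ((μ + n + 1) * (n+1))) := by
  rw [besselTerm_eq hμ, besselTerm_eq hμ]
  have h1 : (0:ℝ) < Real.Gamma (μ + n + 1) := gamma_shift_pos hμ n
  have h3 : (0:ℝ) < (n.factorial : ℝ) := by positivity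
  have hrec : Real.Gamma (μ + (n+1:ℕ) + 1) = (μ + n + 1) * Real.Gamma (μ + n + 1) := by
    have hmn' : (0:ℝ) < μ + n + 1 := by have : (0:ℝ) ≤ n := n.cast_nonneg; linarith
    rw [show μ + ((n+1:ℕ):ℝ) + 1 = (μ + n + 1) + 1 by push_cast; ring,
      Real.Gamma_add_one hmn'.ne']
  rw [hrec, Nat.factorial_succ]
  have hmn : (0:ℝ) < μ + n + 1 := by have : (0:ℝ) ≤ n := n.cast_nonneg; linarith
  push_cast
  field_simp
  ring

lemma besselTerm_summable {μ : ℝ} (hμ : μ > -1) (x : ℝ) : Summable (besselTerm μ x) := by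
  obtain ⟨N, hN⟩ := exists_nat_ge (x^2)
  apply summable_of_ratio_norm_eventually_le (r := 1/2) (by norm_num)
  rw [Filter.eventually_atTop]
  refine ⟨N + 1, fun n hn => ?_⟩
  have hn1 : (x^2 : ℝ) ≤ n := le_trans hN (by exact_mod_cast Nat.le_of_succ_le hn)
  have hn0 : (1:ℝ) ≤ n := by exact_mod_cast Nat.one_le_iff_ne_zero.mpr (by omega)
  rw [besselTerm_succ hμ, Real.norm_eq_abs, Real.norm_eq_abs, abs_mul]
  have hterm : |besselTerm μ x n| = besselTerm μ x n := abs_of_nonneg (besselTerm_nonneg hμ x n)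
  rw [hterm, mul_comm ((1:ℝ)/2)]
  apply mul_le_mul_of_nonneg_left _ (besselTerm_nonneg hμ x n)
  have hmn : (0:ℝ) < μ + n + 1 := by linarith
  have hq : (0:ℝ) ≤ (x^2/4) / ((μ + n + 1) * (n+1)) := by positivity
  rw [abs_of_nonneg hq]
  rw [div_le_iff₀ (by positivity)]
  nlinarith [sq_nonneg x]

lemma besselINorm_pos {μ : ℝ} (hμ : μ > -1) (x : ℝ) : 0 < besselINorm μ x := by
  rw [besselINorm_eq]
  refine Summable.tsum_pos (besselTerm_summable hμ x) (besselTerm_nonneg hμ x) 0 ?_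
  rw [besselTerm_eq hμ]
  have h2 : (0:ℝ) < Real.Gamma (μ + 1) := Real.Gamma_pos_of_pos (by linarith)
  have h1 : (0:ℝ) < Real.Gamma (μ + (0:ℕ) + 1) := gamma_shift_pos hμ 0
  positivity

lemma besselTerm_summable_norm {μ : ℝ} (hμ : μ > -1) (x : ℝ) :
    Summable (fun n => ‖besselTerm μ x n‖) := by
  refine (besselTerm_summable hμ x).congr fun n => ?_
  rw [Real.norm_eq_abs, abs_of_nonneg (besselTerm_nonneg hμ x n)]

set_option maxHeartbeats 1000000 in
lemma coeff_sum {μ σ : ℝ} (hμ : μ > -1) (hσ : σ > -1) (x : ℝ) (n : ℕ) :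
    ∑ k ∈ Finset.range (n+1), besselTerm μ x k * besselTerm σ x (n - k)
      = pcoeff μ σ n / 4^n * (x^2)^n := by
  have hstep : ∀ k ∈ Finset.range (n+1), besselTerm μ x k * besselTerm σ x (n-k)
      = (Real.Gamma (μ+1) * Real.Gamma (σ+1) / n.factorial) *
        ((n.choose k : ℝ) / (Real.Gamma ((μ+1) + k) * Real.Gamma ((σ+1) + (n - k : ℕ)))) *
        (x^2/4)^n := by
    intro k hk
    have hkn : k ≤ n := by simp at hk; omega
    rw [besselTerm_eq hμ, besselTerm_eq hσ]
    have hfact : ((n.choose k : ℝ)) * k.factorial * (n-k).factorial = n.factorial := by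
      exact_mod_cast Nat.choose_mul_factorial_mul_factorial hkn
    have hGk : (0:ℝ) < Real.Gamma (μ + k + 1) := gamma_shift_pos hμ k
    have hGnk : (0:ℝ) < Real.Gamma (σ + (n-k:ℕ) + 1) := gamma_shift_pos hσ (n-k)
    have hfk : (0:ℝ) < (k.factorial : ℝ) := by positivity
    have hfnk : (0:ℝ) < ((n-k).factorial : ℝ) := by positivity
    have hfn : (0:ℝ) < (n.factorial : ℝ) := by positivity
    rw [show (x^2/4 : ℝ)^n = (x^2/4)^k * (x^2/4)^(n-k) by rw [← pow_add]; congr 1; omega,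
      show (μ+1) + (k:ℝ) = μ + k + 1 by ring,
      show (σ+1) + ((n-k:ℕ):ℝ) = σ + (n-k:ℕ) + 1 by ring]
    have hC : (0:ℝ) < (n.choose k : ℝ) := by
      exact_mod_cast Nat.choose_pos hkn
    have hC2 : ((n.choose k : ℕ) : ℝ) = n.factorial / (k.factorial * (n-k).factorial) := by
      rw [eq_div_iff (by positivity)]
      rw [← hfact]; ring
    rw [hC2]
    field_simp [hGk.ne', hGnk.ne', hfk.ne', hfnk.ne']
  rw [Finset.sum_congr rfl hstep, ← Finset.sum_mul, ← Finset.mul_sum,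
    U_closed n (μ+1) (σ+1) (by linarith) (by linarith)]
  have hprod : ∏ j ∈ Finset.range n, ((μ+1) + (σ+1) + (n:ℝ) - 1 + j)
      = ∏ j ∈ Finset.range n, (μ + σ + (n:ℝ) + 1 + j) :=
    Finset.prod_congr rfl fun j _ => by ring
  rw [hprod, show (μ+1) + (n:ℝ) = μ + n + 1 by ring, show (σ+1) + (n:ℝ) = σ + n + 1 by ring,
    pcoeff, div_pow]
  have hGn : (0:ℝ) < Real.Gamma (μ + n + 1) := gamma_shift_pos hμ n
  have hGn' : (0:ℝ) < Real.Gamma (σ + n + 1) := gamma_shift_pos hσ n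
  have hfn : (0:ℝ) < (n.factorial : ℝ) := by positivity
  field_simp [hGn.ne', hGn'.ne', hfn.ne']
  try ring
  try exact Or.inl trivial

lemma prod_repr {μ σ : ℝ} (hμ : μ > -1) (hσ : σ > -1) (x : ℝ) :
    besselINorm μ x * besselINorm σ x = ∑' n, pcoeff μ σ n / 4^n * (x^2)^n := by
  rw [besselINorm_eq, besselINorm_eq,
    tsum_mul_tsum_eq_tsum_sum_range_of_summable_norm
      (besselTerm_summable_norm hμ x) (besselTerm_summable_norm hσ x)]
  exact tsum_congr (coeff_sum hμ hσ x)

lemma prod_summable {μ σ : ℝ} (hμ : μ > -1) (hσ : σ > -1) (x : ℝ) :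
    Summable (fun n => pcoeff μ σ n / 4^n * (x^2)^n) :=
  ((summable_norm_sum_mul_range_of_summable_norm
      (besselTerm_summable_norm hμ x) (besselTerm_summable_norm hσ x)).of_norm).congr
    (coeff_sum hμ hσ x)

lemma pcoeff_pos {μ σ : ℝ} (hμ : μ > -1) (hσ : σ > -1) (n : ℕ) : 0 < pcoeff μ σ n := by
  have h1 : (0:ℝ) < Real.Gamma (μ+1) := Real.Gamma_pos_of_pos (by linarith)
  have h2 : (0:ℝ) < Real.Gamma (σ+1) := Real.Gamma_pos_of_pos (by linarith)
  have h3 : (0:ℝ) < Real.Gamma (μ + n + 1) := gamma_shift_pos hμ n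
  have h4 : (0:ℝ) < Real.Gamma (σ + n + 1) := gamma_shift_pos hσ n
  have h5 : (0:ℝ) < (n.factorial : ℝ) := by positivity
  have h6 : (0:ℝ) < ∏ j ∈ Finset.range n, (μ + σ + (n:ℝ) + 1 + j) := by
    apply Finset.prod_pos
    intro j hj
    have hj' : (j:ℝ) + 1 ≤ (n:ℝ) := by exact_mod_cast Finset.mem_range.mp hj
    have : (0:ℝ) ≤ (j:ℝ) := j.cast_nonneg
    linarith
  rw [pcoeff]
  positivity

lemma turan_coeff {ν : ℝ} (hν : ν > -1) (n : ℕ) :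
    (ν+1) * pcoeff ν (ν+2) n = (ν + n + 1)/(ν + n + 2) * ((ν+2) * pcoeff (ν+1) (ν+1) n) := by
  have hn : (0:ℝ) ≤ (n:ℝ) := n.cast_nonneg
  have hG1 : (0:ℝ) < Real.Gamma (ν+1) := Real.Gamma_pos_of_pos (by linarith)
  have hGn1 : (0:ℝ) < Real.Gamma (ν + n + 1) := gamma_shift_pos hν n
  have hfn : (0:ℝ) < (n.factorial : ℝ) := by positivity
  rw [pcoeff, pcoeff]
  have hprod : ∏ j ∈ Finset.range n, (ν + 1 + (ν + 1) + (n:ℝ) + 1 + j)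
      = ∏ j ∈ Finset.range n, (ν + (ν + 2) + (n:ℝ) + 1 + j) :=
    Finset.prod_congr rfl fun j _ => by ring
  rw [hprod]
  have e1 : Real.Gamma (ν + 2 + 1) = (ν+2) * ((ν+1) * Real.Gamma (ν+1)) := by
    rw [show ν + 2 + 1 = (ν + 2) + 1 by ring, Real.Gamma_add_one (by linarith),
      show ν + 2 = (ν + 1) + 1 by ring, Real.Gamma_add_one (by linarith)]
  have e2 : Real.Gamma (ν + 1 + 1) = (ν+1) * Real.Gamma (ν+1) := by
    rw [Real.Gamma_add_one (by linarith)]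
  have e3 : Real.Gamma (ν + 2 + n + 1) = (ν + n + 2) * ((ν + n + 1) * Real.Gamma (ν + n + 1)) := by
    rw [show ν + 2 + (n:ℝ) + 1 = (ν + n + 2) + 1 by ring, Real.Gamma_add_one (by linarith),
      show ν + (n:ℝ) + 2 = (ν + n + 1) + 1 by ring, Real.Gamma_add_one (by linarith)]
  have e4 : Real.Gamma (ν + 1 + n + 1) = (ν + n + 1) * Real.Gamma (ν + n + 1) := by
    rw [show ν + 1 + (n:ℝ) + 1 = (ν + n + 1) + 1 by ring, Real.Gamma_add_one (by linarith)]
  rw [e1, e2, e3, e4]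
  have h1 : ν + (n:ℝ) + 1 ≠ 0 := by linarith
  have h2 : ν + (n:ℝ) + 2 ≠ 0 := by linarith
  field_simp

lemma pow_mul_pow_le {s t : ℝ} (hs : 0 ≤ s) (ht : 0 ≤ t) (hst : s ≤ t) {m n : ℕ} (hmn : m ≤ n) :
    t^m * s^n ≤ s^m * t^n := by
  obtain ⟨k, rfl⟩ := Nat.exists_eq_add_of_le hmn
  have h := mul_le_mul_of_nonneg_left (pow_le_pow_left₀ hs hst k)
    (pow_nonneg (mul_nonneg hs ht) m)
  rw [mul_pow] at h
  rw [pow_add, pow_add]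
  nlinarith [h]

set_option maxHeartbeats 2000000 in
lemma key_ineq {d r : ℕ → ℝ} {s t : ℝ} (hd : ∀ n, 0 ≤ d n) (hr : Monotone r)
    (hr0 : ∀ n, 0 ≤ r n) (hs : 0 ≤ s) (hst : s ≤ t)
    (h1 : Summable (fun n => d n * s^n)) (h2 : Summable (fun n => d n * t^n))
    (h3 : Summable (fun n => r n * d n * s^n)) (h4 : Summable (fun n => r n * d n * t^n)) :
    (∑' n, r n * d n * s^n) * (∑' n, d n * t^n) ≤ (∑' n, r n * d n * t^n) * (∑' n, d n * s^n) := by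
  have ht : 0 ≤ t := hs.trans hst
  have habs : ∀ (f : ℕ → ℝ), (∀ n, 0 ≤ f n) → Summable f → Summable (fun n => ‖f n‖) := by
    intro f hf hsf
    exact hsf.congr fun n => by rw [Real.norm_eq_abs, abs_of_nonneg (hf n)]
  have hds_n : ∀ n, 0 ≤ d n * s^n := fun n => mul_nonneg (hd n) (pow_nonneg hs n)
  have hdt_n : ∀ n, 0 ≤ d n * t^n := fun n => mul_nonneg (hd n) (pow_nonneg ht n)
  have hrds_n : ∀ n, 0 ≤ r n * d n * s^n := fun n => mul_nonneg (mul_nonneg (hr0 n) (hd n)) (pow_nonneg hs n)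
  have hrdt_n : ∀ n, 0 ≤ r n * d n * t^n := fun n => mul_nonneg (mul_nonneg (hr0 n) (hd n)) (pow_nonneg ht n)
  -- double sums
  have SA : Summable (fun p : ℕ × ℕ => (r p.1 * d p.1 * s^p.1) * (d p.2 * t^p.2)) :=
    summable_mul_of_summable_norm (habs _ hrds_n h3) (habs _ hdt_n h2)
  have SB : Summable (fun p : ℕ × ℕ => (r p.1 * d p.1 * t^p.1) * (d p.2 * s^p.2)) :=
    summable_mul_of_summable_norm (habs _ hrdt_n h4) (habs _ hds_n h1)
  have SA' : Summable (fun p : ℕ × ℕ => (r p.2 * d p.2 * s^p.2) * (d p.1 * t^p.1)) :=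
    summable_mul_of_summable_norm (habs _ hdt_n h2) (habs _ hrds_n h3) |>.congr
      (fun p => by ring)
  have SB' : Summable (fun p : ℕ × ℕ => (r p.2 * d p.2 * t^p.2) * (d p.1 * s^p.1)) :=
    summable_mul_of_summable_norm (habs _ hds_n h1) (habs _ hrdt_n h4) |>.congr
      (fun p => by ring)
  have eA : (∑' n, r n * d n * s^n) * (∑' n, d n * t^n)
      = ∑' p : ℕ × ℕ, (r p.1 * d p.1 * s^p.1) * (d p.2 * t^p.2) :=
    tsum_mul_tsum_of_summable_norm (habs _ hrds_n h3) (habs _ hdt_n h2)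
  have eB : (∑' n, r n * d n * t^n) * (∑' n, d n * s^n)
      = ∑' p : ℕ × ℕ, (r p.1 * d p.1 * t^p.1) * (d p.2 * s^p.2) :=
    tsum_mul_tsum_of_summable_norm (habs _ hrdt_n h4) (habs _ hds_n h1)
  have eA' : (∑' p : ℕ × ℕ, (r p.1 * d p.1 * s^p.1) * (d p.2 * t^p.2))
      = ∑' p : ℕ × ℕ, (r p.2 * d p.2 * s^p.2) * (d p.1 * t^p.1) := by
    rw [← (Equiv.prodComm ℕ ℕ).tsum_eq (fun p : ℕ × ℕ => (r p.1 * d p.1 * s^p.1) * (d p.2 * t^p.2))]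
    rfl
  have eB' : (∑' p : ℕ × ℕ, (r p.1 * d p.1 * t^p.1) * (d p.2 * s^p.2))
      = ∑' p : ℕ × ℕ, (r p.2 * d p.2 * t^p.2) * (d p.1 * s^p.1) := by
    rw [← (Equiv.prodComm ℕ ℕ).tsum_eq (fun p : ℕ × ℕ => (r p.1 * d p.1 * t^p.1) * (d p.2 * s^p.2))]
    rfl
  have hpt : ∀ p : ℕ × ℕ, 0 ≤ ((r p.1 * d p.1 * t^p.1) * (d p.2 * s^p.2)
        + (r p.2 * d p.2 * t^p.2) * (d p.1 * s^p.1))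
      - ((r p.1 * d p.1 * s^p.1) * (d p.2 * t^p.2)
        + (r p.2 * d p.2 * s^p.2) * (d p.1 * t^p.1)) := by
    rintro ⟨m, n⟩
    have key : ((r m * d m * t^m) * (d n * s^n) + (r n * d n * t^n) * (d m * s^m))
        - ((r m * d m * s^m) * (d n * t^n) + (r n * d n * s^n) * (d m * t^m))
        = (d m * d n) * ((r m - r n) * ((t^m * s^n) - (s^m * t^n))) := by ring
    rw [key]
    apply mul_nonneg (mul_nonneg (hd m) (hd n))
    rcases le_total m n with hmn | hmn
    · have h1' : r m ≤ r n := hr hmn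
      have h2' : t^m * s^n ≤ s^m * t^n := pow_mul_pow_le hs ht hst hmn
      nlinarith
    · have h1' : r n ≤ r m := hr hmn
      have h2' : t^n * s^m ≤ s^n * t^m := pow_mul_pow_le hs ht hst hmn
      exact mul_nonneg (by linarith) (by linarith)
  have big : 0 ≤ (∑' p : ℕ × ℕ, (((r p.1 * d p.1 * t^p.1) * (d p.2 * s^p.2)
        + (r p.2 * d p.2 * t^p.2) * (d p.1 * s^p.1))
      - ((r p.1 * d p.1 * s^p.1) * (d p.2 * t^p.2)
        + (r p.2 * d p.2 * s^p.2) * (d p.1 * t^p.1)))) := tsum_nonneg hpt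
  rw [Summable.tsum_sub (SB.add SB') (SA.add SA'), Summable.tsum_add SB SB', Summable.tsum_add SA SA'] at big
  linarith [eA, eB, eA', eB', big]

theorem turan_quotient_monotone (ν : ℝ) (hν : ν > -1) :
    MonotoneOn (fun x => ((ν + 1) * besselINorm ν x * besselINorm (ν + 2) x) /
      ((ν + 2) * besselINorm (ν + 1) x ^ 2)) (Set.Ioi 0) := by
  have hν1 : ν + 1 > -1 := by linarith
  have hν2 : ν + 2 > -1 := by linarith
  have hν2' : (0:ℝ) < ν + 2 := by linarith
  set D : ℕ → ℝ := fun n => pcoeff (ν+1) (ν+1) n / 4^n with hD_def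
  set R : ℕ → ℝ := fun n => (ν + n + 1)/(ν + n + 2) with hR_def
  have hDpos : ∀ n, 0 < D n := fun n => by
    have h := pcoeff_pos hν1 hν1 n
    simp only [hD_def]
    positivity
  have hRmono : Monotone R := by
    intro m n hmn
    have hm : (m:ℝ) ≤ n := Nat.cast_le.mpr hmn
    have hm0 : (0:ℝ) ≤ m := m.cast_nonneg
    have h1 : (0:ℝ) < ν + m + 2 := by linarith
    have h2 : (0:ℝ) < ν + n + 2 := by linarith
    simp only [hR_def]
    rw [div_le_div_iff₀ h1 h2]
    nlinarith
  have hR0 : ∀ n, 0 ≤ R n := fun n => by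
    have hm0 : (0:ℝ) ≤ n := n.cast_nonneg
    simp only [hR_def]
    exact div_nonneg (by linarith) (by linarith)
  have hrd : ∀ n : ℕ, R n * D n = (ν+1)/(ν+2) * (pcoeff ν (ν+2) n / 4^n) := by
    intro n
    have h := turan_coeff hν n
    have hm0 : (0:ℝ) ≤ n := n.cast_nonneg
    have hn2 : (0:ℝ) < ν + n + 2 := by linarith
    simp only [hR_def, hD_def]
    have h4 : (0:ℝ) < (4:ℝ)^n := by positivity
    field_simp at h
    rw [div_mul_div_comm, div_mul_div_comm, div_eq_div_iff (by positivity) (by positivity)]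
    linear_combination (-(4:ℝ)^n) * h
  have hB : ∀ x : ℝ, besselINorm (ν+1) x ^ 2 = ∑' n, D n * (x^2)^n := fun x => by
    rw [pow_two, prod_repr hν1 hν1 x]
  have hsumD : ∀ x : ℝ, Summable (fun n => D n * (x^2)^n) := fun x =>
    (prod_summable hν1 hν1 x).congr fun n => by simp only [hD_def]
  have hsumRD : ∀ x : ℝ, Summable (fun n => R n * D n * (x^2)^n) := fun x =>
    (((prod_summable hν hν2 x).mul_left ((ν+1)/(ν+2))).congr fun n => by
      rw [← mul_assoc, ← hrd n])
  have hN : ∀ x : ℝ, (ν+1) * besselINorm ν x * besselINorm (ν+2) x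
      = (ν+2) * ∑' n, R n * D n * (x^2)^n := by
    intro x
    have : (∑' n, R n * D n * (x^2)^n)
        = (ν+1)/(ν+2) * (besselINorm ν x * besselINorm (ν+2) x) := by
      rw [prod_repr hν hν2 x, ← tsum_mul_left]
      exact tsum_congr fun n => by rw [← mul_assoc, ← hrd n]
    rw [this]
    field_simp
  intro a ha b hb hab
  have ha0 : (0:ℝ) < a := ha
  have hb0 : (0:ℝ) < b := hb
  have hab2 : a^2 ≤ b^2 := pow_le_pow_left₀ ha0.le hab 2
  have MAIN := key_ineq (fun n => (hDpos n).le) hRmono hR0 (sq_nonneg a) hab2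
    (hsumD a) (hsumD b) (hsumRD a) (hsumRD b)
  show ((ν + 1) * besselINorm ν a * besselINorm (ν + 2) a) /
      ((ν + 2) * besselINorm (ν + 1) a ^ 2) ≤
    ((ν + 1) * besselINorm ν b * besselINorm (ν + 2) b) /
      ((ν + 2) * besselINorm (ν + 1) b ^ 2)
  have hBa : (0:ℝ) < besselINorm (ν+1) a := besselINorm_pos hν1 a
  have hBb : (0:ℝ) < besselINorm (ν+1) b := besselINorm_pos hν1 b
  rw [div_le_div_iff₀ (by positivity) (by positivity), hN a, hN b, hB a, hB b]
  have hDa : 0 < ∑' n, D n * (a^2)^n := by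
    rw [← hB a]; positivity
  have hDb : 0 < ∑' n, D n * (b^2)^n := by
    rw [← hB b]; positivity
  nlinarith [MAIN, sq_nonneg (ν+2)]
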